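/- arXiv:2504.04192 — 3 statements merged into one kernel-verified Lean document; each statement's English description precedes it below -/
import Mathlib

section
/- There exists a constant C > 0 such that for all ε ∈ (0,1), all γ ∈ ℝ and all ξ ∈ ℝ, one has |∫_{{x ∈ ℝ : ε < |x| < 1/ε}} e^{ixξ} x^{-1+iγ} dx| ≤ C (1+|γ|) e^{π|γ|}. -/
open MeasureTheory Real

noncomputable section

lemma cpow_neg_ofReal (x : ℝ) (hx : 0 < x) (w : ℂ) :
    ((-x : ℝ) : ℂ) ^ w = (x : ℂ) ^ w * Complex.exp (π * Complex.I * w) := by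
  have hx0 : ((-x : ℝ) : ℂ) ≠ 0 := by
    simp only [ne_eq, Complex.ofReal_eq_zero, neg_eq_zero]
    exact hx.ne'
  have hx0' : ((x : ℝ) : ℂ) ≠ 0 := by
    simp only [ne_eq, Complex.ofReal_eq_zero]; exact hx.ne'
  rw [Complex.cpow_def_of_ne_zero hx0, Complex.cpow_def_of_ne_zero hx0', ← Complex.exp_add]
  congr 1
  have hlog : Complex.log ((-x : ℝ) : ℂ) = (Real.log x : ℂ) + π * Complex.I := by
    rw [Complex.log]
    rw [Complex.arg_ofReal_of_neg (by linarith : (-x : ℝ) < 0)]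
    rw [Complex.norm_real, Real.norm_eq_abs, abs_of_neg (by linarith : (-x:ℝ) < 0)]
    simp
  have hlogp : Complex.log ((x : ℝ) : ℂ) = (Real.log x : ℂ) := (Complex.ofReal_log hx.le).symm
  rw [hlog, hlogp]; ring


lemma exp_sub_one_abs_le (s : ℝ) : |Real.exp s - 1| ≤ |s| * Real.exp |s| := by
  rcases le_or_gt 0 s with hs | hs
  · rw [abs_of_nonneg (by linarith [Real.one_le_exp hs]), abs_of_nonneg hs]
    have h := Real.add_one_le_exp (-s)
    have h2 : (1 - s) * Real.exp s ≤ 1 := by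
      have := Real.exp_pos s
      calc (1 - s) * Real.exp s ≤ Real.exp (-s) * Real.exp s := by nlinarith
        _ = 1 := by rw [← Real.exp_add]; simp
    nlinarith
  · rw [abs_of_nonpos (by linarith [Real.exp_lt_one_iff.2 hs]), abs_of_neg hs]
    have h := Real.add_one_le_exp s
    have h2 : Real.exp (-s) ≥ 1 := Real.one_le_exp (by linarith)
    nlinarith

lemma norm_exp_I_mul_sub_one_le (θ : ℝ) : ‖Complex.exp (θ * Complex.I) - 1‖ ≤ 2 * |θ| := by
  rcases le_or_gt (|θ|) 1 with h | h
  · have := Complex.norm_exp_sub_one_le (x := θ * Complex.I) (by simpa using h)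
    simpa using this
  · have h1 : ‖Complex.exp (θ * Complex.I) - 1‖ ≤ ‖Complex.exp (θ * Complex.I)‖ + 1 := by
      simpa using norm_sub_le (Complex.exp (θ * Complex.I)) 1
    have h2 : ‖Complex.exp (θ * Complex.I)‖ = 1 := by
      simp [Complex.norm_exp]
    linarith



-- derivative of x ↦ (x:ℂ)^c on positive reals
lemma hasDerivAt_cpowr (c : ℂ) {x : ℝ} (hx : 0 < x) :
    HasDerivAt (fun y : ℝ => (y : ℂ) ^ c) (c * (x : ℂ) ^ (c - 1)) x := by
  have h := (Complex.hasStrictDerivAt_cpow_const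
    (x := (x : ℂ)) (c := c) (Or.inl (by simpa using hx))).hasDerivAt
  simpa using h.comp_ofReal

lemma hasDerivAt_expI (ξ x : ℝ) :
    HasDerivAt (fun y : ℝ => Complex.exp (Complex.I * y * ξ))
      (Complex.exp (Complex.I * x * ξ) * (Complex.I * ξ)) x := by
  have h0 : HasDerivAt (fun y : ℝ => (Complex.I * y * ξ : ℂ)) (Complex.I * ξ) x := by
    have := ((hasDerivAt_id x).ofReal_comp).const_mul Complex.I
    have := this.mul_const (ξ : ℂ)
    simpa using this
  simpa using h0.cexp

lemma contOn_cpow (c : ℂ) {s : Set ℝ} (hs : ∀ x ∈ s, 0 < x) :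
    ContinuousOn (fun x : ℝ => (x : ℂ) ^ c) s :=
  ContinuousOn.cpow_const Complex.continuous_ofReal.continuousOn
    (fun x hx => Or.inl (by simpa using hs x hx))

lemma II1 (ξ : ℝ) (c : ℂ) {a b : ℝ} (ha : 0 < a) (hab : a ≤ b) :
    IntervalIntegrable (fun x : ℝ => Complex.exp (Complex.I * x * ξ) * (x : ℂ) ^ c)
      volume a b := by
  apply ContinuousOn.intervalIntegrable
  apply ContinuousOn.mul
  · exact (Complex.continuous_exp.comp (by continuity)).continuousOn
  · apply contOn_cpow
    intro x hx
    rw [Set.uIcc_of_le hab] at hx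
    exact lt_of_lt_of_le ha hx.1

lemma II2 (c : ℂ) {a b : ℝ} (ha : 0 < a) (hab : a ≤ b) :
    IntervalIntegrable (fun x : ℝ => (x : ℂ) ^ c) volume a b := by
  apply ContinuousOn.intervalIntegrable
  apply contOn_cpow
  intro x hx
  rw [Set.uIcc_of_le hab] at hx
  exact lt_of_lt_of_le ha hx.1

-- K formula
lemma K_bound (γ : ℝ) (hγ : γ ≠ 0) {a c : ℝ} (ha : 0 < a) (hac : a ≤ c) :
    ‖∫ x in a..c, (x : ℂ) ^ ((-1 : ℂ) + γ * Complex.I)‖ ≤ 2 / |γ| := by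
  have hc : 0 < c := lt_of_lt_of_le ha hac
  have hne : (γ : ℂ) * Complex.I ≠ 0 := by
    simp [Complex.ext_iff, hγ]
  have hderiv : ∀ x ∈ Set.uIcc a c,
      HasDerivAt (fun y : ℝ => (y : ℂ) ^ (γ * Complex.I) / (γ * Complex.I))
        ((x : ℂ) ^ ((-1 : ℂ) + γ * Complex.I)) x := by
    intro x hx
    rw [Set.uIcc_of_le hac] at hx
    have hx0 : 0 < x := lt_of_lt_of_le ha hx.1
    have h := (hasDerivAt_cpowr (γ * Complex.I) hx0).div_const (γ * Complex.I)
    have he : (γ * Complex.I * (x : ℂ) ^ ((γ : ℂ) * Complex.I - 1)) / (γ * Complex.I)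
        = (x : ℂ) ^ ((-1 : ℂ) + γ * Complex.I) := by
      rw [mul_comm, mul_div_assoc, div_self hne, mul_one]
      congr 1
      ring
    rwa [he] at h
  rw [intervalIntegral.integral_eq_sub_of_hasDerivAt hderiv
    (II2 _ ha hac)]
  have h1 : ∀ x : ℝ, 0 < x → ‖(x : ℂ) ^ ((γ : ℂ) * Complex.I)‖ = 1 := by
    intro x hx
    rw [Complex.norm_cpow_eq_rpow_re_of_pos hx]
    simp
  have hγI : ‖(γ : ℂ) * Complex.I‖ = |γ| := by
    simp
  calc ‖(c : ℂ) ^ ((γ:ℂ) * Complex.I) / (γ * Complex.I)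
        - (a : ℂ) ^ ((γ:ℂ) * Complex.I) / (γ * Complex.I)‖
      ≤ ‖(c : ℂ) ^ ((γ:ℂ) * Complex.I) / (γ * Complex.I)‖
        + ‖(a : ℂ) ^ ((γ:ℂ) * Complex.I) / (γ * Complex.I)‖ := norm_sub_le _ _
    _ = 1 / |γ| + 1 / |γ| := by
        rw [norm_div, norm_div, h1 c hc, h1 a ha, hγI]
    _ = 2 / |γ| := by ring

lemma integral_inv_sq {c b : ℝ} (hc : 0 < c) (hcb : c ≤ b) :
    ∫ x in c..b, (x ^ 2)⁻¹ = c⁻¹ - b⁻¹ := by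
  have hderiv : ∀ x ∈ Set.uIcc c b, HasDerivAt (fun y : ℝ => -y⁻¹) ((x ^ 2)⁻¹) x := by
    intro x hx
    rw [Set.uIcc_of_le hcb] at hx
    have hx0 : x ≠ 0 := (lt_of_lt_of_le hc hx.1).ne'
    simpa using (hasDerivAt_inv hx0).fun_neg
  have hint : IntervalIntegrable (fun x : ℝ => (x ^ 2)⁻¹) volume c b := by
    apply ContinuousOn.intervalIntegrable
    apply ContinuousOn.inv₀ (by fun_prop)
    intro x hx
    rw [Set.uIcc_of_le hcb] at hx
    have : 0 < x := lt_of_lt_of_le hc hx.1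
    positivity
  rw [intervalIntegral.integral_eq_sub_of_hasDerivAt hderiv hint]
  ring

-- tail bound via integration by parts
lemma tail_bound (γ ξ : ℝ) (hξ : ξ ≠ 0) {c b : ℝ} (hc : 0 < c) (hcb : c ≤ b)
    (hcξ : 1 ≤ c * |ξ|) :
    ‖∫ x in c..b, Complex.exp (Complex.I * x * ξ) * (x : ℂ) ^ ((-1 : ℂ) + γ * Complex.I)‖
      ≤ 3 * (1 + |γ|) := by
  set w : ℂ := (-1 : ℂ) + γ * Complex.I with hw
  have hξ0 : (Complex.I * ξ) ≠ 0 := by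
    simp [Complex.ext_iff, hξ]
  set v : ℂ := w / (Complex.I * ξ) with hv
  -- derivative of F
  have hderiv : ∀ x ∈ Set.uIcc c b,
      HasDerivAt (fun y : ℝ => Complex.exp (Complex.I * y * ξ) * (y : ℂ) ^ w / (Complex.I * ξ))
        (Complex.exp (Complex.I * x * ξ) * (x : ℂ) ^ w
          + v * (Complex.exp (Complex.I * x * ξ) * (x : ℂ) ^ ((-2 : ℂ) + γ * Complex.I))) x := by
    intro x hx
    rw [Set.uIcc_of_le hcb] at hx
    have hx0 : 0 < x := lt_of_lt_of_le hc hx.1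
    have h := ((hasDerivAt_expI ξ x).mul (hasDerivAt_cpowr w hx0)).div_const (Complex.I * ξ)
    have he : (Complex.exp (Complex.I * x * ξ) * (Complex.I * ξ) * (x : ℂ) ^ w
          + Complex.exp (Complex.I * x * ξ) * (w * (x : ℂ) ^ (w - 1))) / (Complex.I * ξ)
        = Complex.exp (Complex.I * x * ξ) * (x : ℂ) ^ w
          + v * (Complex.exp (Complex.I * x * ξ) * (x : ℂ) ^ ((-2 : ℂ) + γ * Complex.I)) := by
      have hw1 : w - 1 = (-2 : ℂ) + γ * Complex.I := by rw [hw]; ring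
      rw [hw1, hv]
      have hξc : (ξ:ℂ) ≠ 0 := Complex.ofReal_ne_zero.mpr hξ
      field_simp
    rwa [he] at h
  have hint1 := II1 ξ w hc hcb
  have hint2 := II1 ξ ((-2 : ℂ) + γ * Complex.I) hc hcb
  have hFTC := intervalIntegral.integral_eq_sub_of_hasDerivAt hderiv
    (hint1.add (hint2.const_mul v))
  rw [intervalIntegral.integral_add hint1 (hint2.const_mul v),
    intervalIntegral.integral_const_mul] at hFTC
  have hb : 0 < b := lt_of_lt_of_le hc hcb
  have habs : |ξ| > 0 := abs_pos.2 hξ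
  have normF : ∀ x : ℝ, 0 < x →
      ‖Complex.exp (Complex.I * x * ξ) * (x : ℂ) ^ w / (Complex.I * ξ)‖ = x⁻¹ / |ξ| := by
    intro x hx
    rw [norm_div, norm_mul]
    have h1 : ‖Complex.exp (Complex.I * x * ξ)‖ = 1 := by
      rw [Complex.norm_exp]
      norm_num
    have h2 : ‖(x : ℂ) ^ w‖ = x⁻¹ := by
      rw [Complex.norm_cpow_eq_rpow_re_of_pos hx]
      have : w.re = -1 := by simp [hw]
      rw [this, Real.rpow_neg_one]
    have h3 : ‖Complex.I * (ξ : ℂ)‖ = |ξ| := by simp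
    rw [h1, h2, h3, one_mul]
  have hcinv : c⁻¹ ≤ |ξ| := by
    have h := mul_inv_cancel₀ hc.ne'
    nlinarith
  have hFb : ‖Complex.exp (Complex.I * b * ξ) * (b : ℂ) ^ w / (Complex.I * ξ)‖ ≤ 1 := by
    rw [normF b hb, div_le_one habs]
    exact le_trans (by gcongr) hcinv
  have hFc : ‖Complex.exp (Complex.I * c * ξ) * (c : ℂ) ^ w / (Complex.I * ξ)‖ ≤ 1 := by
    rw [normF c hc, div_le_one habs]
    exact hcinv
  have hg : ‖∫ x in c..b, Complex.exp (Complex.I * x * ξ) * (x : ℂ) ^ ((-2:ℂ) + γ * Complex.I)‖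
      ≤ c⁻¹ := by
    have hle : ∀ᵐ (t : ℝ) ∂(volume.restrict (Set.uIoc c b)),
        ‖Complex.exp (Complex.I * t * ξ) * (t : ℂ) ^ ((-2:ℂ) + γ * Complex.I)‖ ≤ (t ^ 2)⁻¹ := by
      rw [Set.uIoc_of_le hcb]
      filter_upwards [ae_restrict_mem measurableSet_Ioc] with t ht
      have ht0 : 0 < t := lt_of_lt_of_le hc ht.1.le
      rw [norm_mul]
      have h1 : ‖Complex.exp (Complex.I * t * ξ)‖ = 1 := by
        rw [Complex.norm_exp]; norm_num
      have h2 : ‖(t : ℂ) ^ ((-2:ℂ) + γ * Complex.I)‖ = (t ^ 2)⁻¹ := by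
        rw [Complex.norm_cpow_eq_rpow_re_of_pos ht0]
        have : ((-2:ℂ) + γ * Complex.I).re = -2 := by simp
        rw [this]
        rw [show (-2 : ℝ) = -(2 : ℕ) by norm_num, Real.rpow_neg ht0.le, Real.rpow_natCast]
      rw [h1, h2, one_mul]
    have hgint : IntervalIntegrable (fun t : ℝ => (t ^ 2)⁻¹) volume c b := by
      apply ContinuousOn.intervalIntegrable
      apply ContinuousOn.inv₀ (by fun_prop)
      intro x hx
      rw [Set.uIcc_of_le hcb] at hx
      have : 0 < x := lt_of_lt_of_le hc hx.1
      positivity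
    have := intervalIntegral.norm_integral_le_abs_of_norm_le hle hgint
    rw [integral_inv_sq hc hcb] at this
    refine this.trans ?_
    rw [abs_of_nonneg (by rw [sub_nonneg]; exact inv_anti₀ hc hcb)]
    have : 0 < b⁻¹ := by positivity
    linarith
  have hv' : ‖v‖ ≤ (1 + |γ|) / |ξ| := by
    rw [hv, norm_div, show ‖Complex.I * (ξ:ℂ)‖ = |ξ| by simp]
    gcongr
    calc ‖w‖ = ‖(-1:ℂ) + (γ:ℂ) * Complex.I‖ := by rw [hw]
      _ ≤ ‖(-1:ℂ)‖ + ‖(γ:ℂ) * Complex.I‖ := norm_add_le _ _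
      _ = 1 + |γ| := by simp
  have heq := eq_sub_of_add_eq hFTC
  rw [heq]
  have hG := hg
  calc ‖Complex.exp (Complex.I * b * ξ) * (b:ℂ) ^ w / (Complex.I * ξ)
        - Complex.exp (Complex.I * c * ξ) * (c:ℂ) ^ w / (Complex.I * ξ)
        - v * ∫ x in c..b, Complex.exp (Complex.I * x * ξ) * (x : ℂ) ^ ((-2:ℂ) + γ * Complex.I)‖
      ≤ ‖Complex.exp (Complex.I * b * ξ) * (b:ℂ) ^ w / (Complex.I * ξ)
        - Complex.exp (Complex.I * c * ξ) * (c:ℂ) ^ w / (Complex.I * ξ)‖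
        + ‖v‖ * ‖∫ x in c..b, Complex.exp (Complex.I * x * ξ) * (x : ℂ) ^ ((-2:ℂ) + γ * Complex.I)‖ := by
        rw [← norm_mul]
        exact norm_sub_le _ _
    _ ≤ (1 + 1) + ((1 + |γ|) / |ξ|) * c⁻¹ := by
        gcongr
        exact (norm_sub_le _ _).trans (by linarith)
    _ ≤ 3 * (1 + |γ|) := by
        have h1 : c⁻¹ / |ξ| ≤ 1 := by
          rw [div_le_one habs]; exact hcinv
        have h2 : ((1 + |γ|) / |ξ|) * c⁻¹ = (1 + |γ|) * (c⁻¹ / |ξ|) := by ring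
        have h3 : 0 ≤ |γ| := abs_nonneg γ
        nlinarith

def cc (ξ a b : ℝ) : ℝ := if ξ = 0 then b else min b (max a |ξ|⁻¹)

lemma cc_mem {ξ a b : ℝ} (hab : a ≤ b) : a ≤ cc ξ a b ∧ cc ξ a b ≤ b := by
  unfold cc
  split
  · exact ⟨hab, le_refl b⟩
  · exact ⟨le_min hab (le_max_left a _), min_le_left _ _⟩

lemma cc_neg (ξ a b : ℝ) : cc (-ξ) a b = cc ξ a b := by
  unfold cc
  simp [abs_neg, neg_eq_zero]

lemma main_pos (γ ξ : ℝ) {a b : ℝ} (ha : 0 < a) (hab : a ≤ b) :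
    ‖(∫ x in a..b, Complex.exp (Complex.I * x * ξ) * (x : ℂ) ^ ((-1 : ℂ) + γ * Complex.I))
      - ∫ x in a..(cc ξ a b), (x : ℂ) ^ ((-1 : ℂ) + γ * Complex.I)‖ ≤ 5 * (1 + |γ|) := by
  set w : ℂ := (-1 : ℂ) + γ * Complex.I with hw
  obtain ⟨hac, hcb⟩ := cc_mem (ξ := ξ) hab
  set c : ℝ := cc ξ a b with hcdef
  have hc : 0 < c := lt_of_lt_of_le ha hac
  -- split the integral
  have hsplit : (∫ x in a..b, Complex.exp (Complex.I * x * ξ) * (x : ℂ) ^ w)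
      = (∫ x in a..c, Complex.exp (Complex.I * x * ξ) * (x : ℂ) ^ w)
        + ∫ x in c..b, Complex.exp (Complex.I * x * ξ) * (x : ℂ) ^ w :=
    (intervalIntegral.integral_add_adjacent_intervals (II1 ξ w ha hac) (II1 ξ w hc hcb)).symm
  have hsub : (∫ x in a..c, Complex.exp (Complex.I * x * ξ) * (x : ℂ) ^ w)
      - (∫ x in a..c, (x : ℂ) ^ w)
      = ∫ x in a..c, (Complex.exp (Complex.I * x * ξ) - 1) * (x : ℂ) ^ w := by
    rw [← intervalIntegral.integral_sub (II1 ξ w ha hac) (II2 w ha hac)]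
    congr 1; funext x; ring
  have hE : ‖∫ x in a..c, (Complex.exp (Complex.I * x * ξ) - 1) * (x : ℂ) ^ w‖ ≤ 2 := by
    rcases eq_or_ne ξ 0 with h0 | h0
    · have : ∀ x : ℝ, (Complex.exp (Complex.I * x * ξ) - 1) * (x : ℂ) ^ w = 0 := by
        intro x; rw [h0]; simp
      simp [this]
    · have hbound : ∀ x ∈ Set.uIoc a c,
          ‖(Complex.exp (Complex.I * x * ξ) - 1) * (x : ℂ) ^ w‖ ≤ 2 * |ξ| := by
        intro x hx
        rw [Set.uIoc_of_le hac] at hx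
        have hx0 : 0 < x := lt_of_lt_of_le ha hx.1.le
        rw [norm_mul]
        have h1 : ‖Complex.exp (Complex.I * x * ξ) - 1‖ ≤ 2 * |x * ξ| := by
          have hrw : Complex.I * x * ξ = ((x * ξ : ℝ) : ℂ) * Complex.I := by
            push_cast; ring
          rw [hrw]
          exact norm_exp_I_mul_sub_one_le (x * ξ)
        have h2 : ‖(x : ℂ) ^ w‖ = x⁻¹ := by
          rw [Complex.norm_cpow_eq_rpow_re_of_pos hx0]
          have : w.re = -1 := by simp [hw]
          rw [this, Real.rpow_neg_one]
        calc ‖Complex.exp (Complex.I * x * ξ) - 1‖ * ‖(x : ℂ) ^ w‖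
            ≤ (2 * |x * ξ|) * x⁻¹ := by
              rw [h2]; gcongr
          _ = 2 * |ξ| := by
              rw [abs_mul, abs_of_pos hx0]
              field_simp
      have := intervalIntegral.norm_integral_le_of_norm_le_const hbound
      refine this.trans ?_
      have hca : c - a ≤ |ξ|⁻¹ := by
        have : c ≤ max a |ξ|⁻¹ := by
          rw [hcdef]; unfold cc; rw [if_neg h0]; exact min_le_right _ _
        rcases max_cases a |ξ|⁻¹ with ⟨hm, _⟩ | ⟨hm, hm2⟩
        · rw [hm] at this
          have h3 : (0:ℝ) < |ξ|⁻¹ := by positivity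
          linarith
        · rw [hm] at this; linarith
      have habs : (0:ℝ) < |ξ| := abs_pos.2 h0
      rw [abs_of_nonneg (by linarith : (0:ℝ) ≤ c - a)]
      calc 2 * |ξ| * (c - a) ≤ 2 * |ξ| * |ξ|⁻¹ := by gcongr
        _ = 2 := by field_simp
  have hT : ‖∫ x in c..b, Complex.exp (Complex.I * x * ξ) * (x : ℂ) ^ w‖ ≤ 3 * (1 + |γ|) := by
    rcases eq_or_ne ξ 0 with h0 | h0
    · have hcb' : c = b := by rw [hcdef]; unfold cc; rw [if_pos h0]
      rw [hcb']
      simp [abs_nonneg γ]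
      positivity
    · rcases le_or_gt b (max a |ξ|⁻¹) with hble | hble
      · have hcb' : c = b := by
          rw [hcdef]; unfold cc; rw [if_neg h0, min_eq_left hble]
        rw [hcb']
        simp
        positivity
      · have hcc : c = max a |ξ|⁻¹ := by
          rw [hcdef]; unfold cc; rw [if_neg h0, min_eq_right hble.le]
        have habs : (0:ℝ) < |ξ| := abs_pos.2 h0
        have h1c : 1 ≤ c * |ξ| := by
          have : |ξ|⁻¹ ≤ c := by rw [hcc]; exact le_max_right _ _
          calc (1:ℝ) = |ξ|⁻¹ * |ξ| := by field_simp
            _ ≤ c * |ξ| := by gcongr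
        exact tail_bound γ ξ h0 hc hcb h1c
  calc ‖(∫ x in a..b, Complex.exp (Complex.I * x * ξ) * (x : ℂ) ^ w)
        - ∫ x in a..c, (x : ℂ) ^ w‖
      = ‖(∫ x in a..c, (Complex.exp (Complex.I * x * ξ) - 1) * (x : ℂ) ^ w)
        + ∫ x in c..b, Complex.exp (Complex.I * x * ξ) * (x : ℂ) ^ w‖ := by
        rw [hsplit, ← hsub]; congr 1; ring
    _ ≤ ‖∫ x in a..c, (Complex.exp (Complex.I * x * ξ) - 1) * (x : ℂ) ^ w‖
        + ‖∫ x in c..b, Complex.exp (Complex.I * x * ξ) * (x : ℂ) ^ w‖ := norm_add_le _ _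
    _ ≤ 2 + 3 * (1 + |γ|) := by gcongr
    _ ≤ 5 * (1 + |γ|) := by nlinarith [abs_nonneg γ]

/-- There exists `C > 0` such that for all `ε ∈ (0,1)`, all `γ ∈ ℝ` and all `ξ ∈ ℝ`,
`|∫_{ε<|x|<1/ε} e^{ixξ} x^{-1+iγ} dx| ≤ C (1+|γ|) e^{π|γ|}`, where the complex power
`x^{-1+iγ}` is taken with the principal branch of the logarithm. -/
theorem stmt0 :
    ∃ C : ℝ, 0 < C ∧ ∀ ε γ ξ : ℝ, ε ∈ Set.Ioo (0 : ℝ) 1 →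
      ‖∫ x in {x : ℝ | ε < |x| ∧ |x| < 1 / ε},
          Complex.exp (Complex.I * x * ξ) * (x : ℂ) ^ ((-1 : ℂ) + γ * Complex.I)‖ ≤
        C * (1 + |γ|) * Real.exp (π * |γ|) := by
  refine ⟨20, by norm_num, fun ε γ ξ hε => ?_⟩
  obtain ⟨hε0, hε1⟩ := hε
  set w : ℂ := (-1 : ℂ) + γ * Complex.I with hw
  set f : ℝ → ℂ := fun x => Complex.exp (Complex.I * x * ξ) * (x : ℂ) ^ w with hf
  have hb0 : (0:ℝ) < 1 / ε := by positivity
  have hab : ε ≤ 1 / ε := by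
    rw [le_div_iff₀ hε0]; nlinarith
  -- set decomposition
  have hS : {x : ℝ | ε < |x| ∧ |x| < 1 / ε}
      = Set.Ioo (-(1/ε)) (-ε) ∪ Set.Ioo ε (1/ε) := by
    ext x
    simp only [Set.mem_setOf_eq, Set.mem_union, Set.mem_Ioo]
    rcases le_or_gt 0 x with hx | hx
    · rw [abs_of_nonneg hx]
      constructor
      · rintro ⟨h1, h2⟩; right; exact ⟨h1, h2⟩
      · rintro (⟨h1, h2⟩ | ⟨h1, h2⟩) <;> constructor <;> linarith
    · rw [abs_of_neg hx]
      constructor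
      · rintro ⟨h1, h2⟩; left; constructor <;> linarith
      · rintro (⟨h1, h2⟩ | ⟨h1, h2⟩) <;> constructor <;> linarith
  -- the function on the negative part
  set g : ℝ → ℂ := fun x => Complex.exp (Complex.I * x * ξ) * ((-x : ℝ) : ℂ) ^ w
      * Complex.exp (π * Complex.I * w) with hg
  have hfg : Set.EqOn f g (Set.Ioo (-(1/ε)) (-ε)) := by
    intro x hx
    obtain ⟨h1, h2⟩ := hx
    have hx0 : x < 0 := by linarith
    have : (x : ℂ) ^ w = ((-x : ℝ) : ℂ) ^ w * Complex.exp (π * Complex.I * w) := by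
      have := cpow_neg_ofReal (-x) (by linarith) w
      rw [neg_neg] at this
      exact this
    rw [hf, hg]
    simp only
    rw [this]; ring
  have hgcont : ContinuousOn g (Set.Icc (-(1/ε)) (-ε)) := by
    apply ContinuousOn.mul
    apply ContinuousOn.mul
    · exact (Complex.continuous_exp.comp (by continuity)).continuousOn
    · apply ContinuousOn.comp (t := Set.Icc ε (1/ε)) (contOn_cpow w ?_) (by fun_prop) ?_
      · intro y hy; exact lt_of_lt_of_le hε0 hy.1
      · intro y hy
        constructor <;> [linarith [hy.2]; linarith [hy.1]]
    · exact continuousOn_const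
  have hgint : IntegrableOn g (Set.Ioo (-(1/ε)) (-ε)) volume :=
    (hgcont.integrableOn_compact isCompact_Icc).mono_set Set.Ioo_subset_Icc_self
  have hfintneg : IntegrableOn f (Set.Ioo (-(1/ε)) (-ε)) volume :=
    (hgint.congr_fun hfg.symm measurableSet_Ioo)
  have hfintpos : IntegrableOn f (Set.Ioo ε (1/ε)) volume := by
    have := (II1 ξ w hε0 hab).1
    exact this.mono_set Set.Ioo_subset_Ioc_self
  -- split
  have hdisj : Disjoint (Set.Ioo (-(1/ε)) (-ε)) (Set.Ioo ε (1/ε)) := by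
    rw [Set.disjoint_left]
    rintro x ⟨_, h2⟩ ⟨h3, _⟩
    linarith
  rw [hS, setIntegral_union hdisj measurableSet_Ioo hfintneg hfintpos]
  -- negative part
  have hneg : ∫ x in Set.Ioo (-(1/ε)) (-ε), f x
      = Complex.exp (π * Complex.I * w)
        * ∫ x in ε..(1/ε), Complex.exp (Complex.I * x * (-ξ)) * (x : ℂ) ^ w := by
    rw [setIntegral_congr_fun measurableSet_Ioo hfg]
    rw [← MeasureTheory.integral_Ioc_eq_integral_Ioo,
      ← intervalIntegral.integral_of_le (by linarith : -(1/ε) ≤ -ε)]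
    rw [show ∫ x in (-(1/ε))..(-ε), g x = ∫ x in ε..(1/ε), g (-x) by
      rw [intervalIntegral.integral_comp_neg (a := ε) (b := 1/ε) g]]
    rw [← intervalIntegral.integral_const_mul]
    congr 1
    funext x
    rw [hg]
    simp only [neg_neg]
    rw [show Complex.I * ((-x : ℝ) : ℂ) * (ξ : ℂ) = Complex.I * (x : ℂ) * (-(ξ : ℂ)) by
      push_cast; ring]
    push_cast
    ring
  -- positive part
  have hpos : ∫ x in Set.Ioo ε (1/ε), f x = ∫ x in ε..(1/ε), f x := by
    rw [← MeasureTheory.integral_Ioc_eq_integral_Ioo,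
      ← intervalIntegral.integral_of_le hab]
  -- the exponential constant
  have hexp : Complex.exp (π * Complex.I * w) = -((Real.exp (-(γ * π)) : ℝ) : ℂ) := by
    rw [hw]
    rw [show (π:ℂ) * Complex.I * (-1 + γ * Complex.I)
        = ((-(γ * π) : ℝ) : ℂ) + ((-π : ℝ) : ℂ) * Complex.I by
      push_cast; linear_combination (↑γ * ↑π : ℂ) * Complex.I_sq]
    rw [Complex.exp_add]
    rw [show ((-π : ℝ) : ℂ) * Complex.I = -(↑π * Complex.I) by push_cast; ring]
    rw [Complex.exp_neg, Complex.exp_pi_mul_I]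
    rw [← Complex.ofReal_exp]
    norm_num
  set E : ℝ := Real.exp (-(γ * π)) with hE
  have hEpos : 0 < E := Real.exp_pos _
  set c : ℝ := cc ξ ε (1/ε) with hc
  obtain ⟨hac, hcb⟩ := cc_mem (ξ := ξ) hab
  set K : ℂ := ∫ x in ε..c, (x : ℂ) ^ w with hK
  have hM1 : ‖(∫ x in ε..(1/ε), f x) - K‖ ≤ 5 * (1 + |γ|) := main_pos γ ξ hε0 hab
  have hM2 : ‖(∫ x in ε..(1/ε), Complex.exp (Complex.I * x * (-ξ)) * (x : ℂ) ^ w) - K‖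
      ≤ 5 * (1 + |γ|) := by
    have := main_pos γ (-ξ) hε0 hab
    rw [cc_neg] at this
    push_cast at this ⊢
    exact this
  -- K bound
  have hKb : |1 - E| * ‖K‖ ≤ 2 * π * Real.exp (π * |γ|) := by
    rcases eq_or_ne γ 0 with h0 | h0
    · rw [h0] at hE
      simp [hE]
      positivity
    · have h1 : ‖K‖ ≤ 2 / |γ| := K_bound γ h0 hε0 hac
      have h2 : |1 - E| ≤ π * |γ| * Real.exp (π * |γ|) := by
        rw [hE, abs_sub_comm]
        have := exp_sub_one_abs_le (-(γ * π))
        rw [abs_neg, abs_mul, abs_of_pos pi_pos] at this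
        refine this.trans ?_
        rw [mul_comm |γ| π]
      calc |1 - E| * ‖K‖ ≤ (π * |γ| * Real.exp (π * |γ|)) * (2 / |γ|) := by
            gcongr
        _ = 2 * π * Real.exp (π * |γ|) := by
            field_simp [abs_ne_zero.2 h0]
    -- end
  have hEle : E ≤ Real.exp (π * |γ|) := by
    rw [hE]
    apply Real.exp_le_exp.2
    have := le_abs_self (-(γ * π))
    rw [abs_neg, abs_mul, abs_of_pos pi_pos] at this
    linarith [this]
  -- final computation
  rw [hneg, hpos, hexp]
  set J1 : ℂ := ∫ x in ε..(1/ε), f x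
  set J2 : ℂ := ∫ x in ε..(1/ε), Complex.exp (Complex.I * x * (-ξ)) * (x : ℂ) ^ w
  have hid : -((E : ℝ) : ℂ) * J2 + J1
      = (J1 - K) - ((E : ℝ) : ℂ) * (J2 - K) + ((1 : ℂ) - ((E : ℝ) : ℂ)) * K := by
    ring
  rw [hid]
  have h1E : ‖((1 : ℂ) - ((E : ℝ) : ℂ))‖ = |1 - E| := by
    rw [show ((1 : ℂ) - ((E : ℝ) : ℂ)) = (((1 - E : ℝ)) : ℂ) by push_cast; ring]
    rw [Complex.norm_real]
    simp [Real.norm_eq_abs]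
  have hEnorm : ‖((E : ℝ) : ℂ)‖ = E := by
    rw [Complex.norm_real, Real.norm_eq_abs, abs_of_pos hEpos]
  have hexp1 : (1:ℝ) ≤ Real.exp (π * |γ|) := Real.one_le_exp (by positivity)
  calc ‖(J1 - K) - ((E : ℝ) : ℂ) * (J2 - K) + ((1 : ℂ) - ((E : ℝ) : ℂ)) * K‖
      ≤ ‖(J1 - K) - ((E : ℝ) : ℂ) * (J2 - K)‖ + ‖((1 : ℂ) - ((E : ℝ) : ℂ)) * K‖ :=
        norm_add_le _ _
    _ ≤ (‖J1 - K‖ + ‖((E : ℝ) : ℂ)‖ * ‖J2 - K‖) + ‖((1 : ℂ) - ((E : ℝ) : ℂ))‖ * ‖K‖ := by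
        refine add_le_add ?_ (le_of_eq (norm_mul _ _))
        refine (norm_sub_le _ _).trans ?_
        rw [norm_mul]
    _ ≤ (5 * (1 + |γ|) + Real.exp (π * |γ|) * (5 * (1 + |γ|))) + 2 * π * Real.exp (π * |γ|) := by
        rw [hEnorm, h1E]
        gcongr
    _ ≤ 20 * (1 + |γ|) * Real.exp (π * |γ|) := by
        have hγ0 : 0 ≤ |γ| := abs_nonneg γ
        nlinarith [pi_le_four, pi_pos]

end
end

section
/- There exists a constant C > 0 such that for all a ∈ (0,1) and all γ ∈ ℝ, one has |∫_{{t ∈ ℝ : a < |t| < 1}} e^{it} t^{-1+iγ} dt| ≤ C e^{π|γ|}. -/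
open MeasureTheory Real

lemma abs_one_sub_exp_le (x : ℝ) : |1 - Real.exp x| ≤ |x| * Real.exp |x| := by
  rcases le_or_gt 0 x with h | h
  · rw [abs_of_nonneg h, abs_sub_comm, abs_of_nonneg (by linarith [Real.one_le_exp h])]
    have h1 : 1 - x ≤ Real.exp (-x) := by linarith [Real.add_one_le_exp (-x)]
    have h2 := mul_le_mul_of_nonneg_left h1 (Real.exp_pos x).le
    rw [← Real.exp_add] at h2
    simp only [add_neg_cancel, Real.exp_zero] at h2
    nlinarith
  · rw [abs_of_neg h, abs_of_nonneg (by linarith [Real.exp_lt_one_iff.mpr h] : (0:ℝ) ≤ 1 - Real.exp x)]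
    have h1 : x + 1 ≤ Real.exp x := Real.add_one_le_exp x
    nlinarith [Real.one_le_exp (by linarith : (0:ℝ) ≤ -x)]

lemma log_neg_ofReal {s : ℝ} (hs : 0 < s) :
    Complex.log (((-s : ℝ) : ℂ)) = (Real.log s : ℂ) + π * Complex.I := by
  rw [Complex.log]
  have h1 : ‖((-s : ℝ) : ℂ)‖ = s := by
    rw [Complex.norm_real, Real.norm_eq_abs, abs_of_neg (by linarith)]; ring
  have h2 : Complex.arg ((-s : ℝ) : ℂ) = π :=
    Complex.arg_ofReal_of_neg (by linarith)
  rw [h1, h2]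

lemma cpow_neg_ofReal_s1 (γ : ℝ) {s : ℝ} (hs : 0 < s) :
    ((-s : ℝ) : ℂ) ^ ((-1 : ℂ) + γ * Complex.I)
    = -((Real.exp (-(γ * π)) : ℝ) : ℂ) * (s : ℂ) ^ ((-1 : ℂ) + γ * Complex.I) := by
  have hne : ((-s : ℝ) : ℂ) ≠ 0 := by
    simpa using (by linarith : -s ≠ 0)
  have hne' : ((s : ℝ) : ℂ) ≠ 0 := by simpa using hs.ne'
  rw [Complex.cpow_def_of_ne_zero hne, Complex.cpow_def_of_ne_zero hne',
    log_neg_ofReal hs, ← Complex.ofReal_log hs.le, add_mul, Complex.exp_add]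
  have key : Complex.exp ((π : ℂ) * Complex.I * ((-1 : ℂ) + γ * Complex.I))
      = -((Real.exp (-(γ * π)) : ℝ) : ℂ) := by
    have hI : (π : ℂ) * Complex.I * ((-1 : ℂ) + γ * Complex.I)
        = (((-(γ * π)) : ℝ) : ℂ) - (π : ℝ) * Complex.I := by
      push_cast
      ring_nf
      rw [Complex.I_sq]
      ring
    rw [hI, Complex.exp_sub, Complex.exp_pi_mul_I, ← Complex.ofReal_exp]
    field_simp
  rw [key]
  ring

/-- There exists `C > 0` such that for all `a ∈ (0,1)` and all `γ ∈ ℝ`,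
`|∫_{a<|t|<1} e^{it} t^{-1+iγ} dt| ≤ C e^{π|γ|}`, the complex power being taken
with the principal branch of the logarithm. -/
theorem stmt1 :
    ∃ C : ℝ, 0 < C ∧ ∀ a γ : ℝ, a ∈ Set.Ioo (0 : ℝ) 1 →
      ‖∫ t in {t : ℝ | a < |t| ∧ |t| < 1},
          Complex.exp (Complex.I * t) * (t : ℂ) ^ ((-1 : ℂ) + γ * Complex.I)‖ ≤
        C * Real.exp (π * |γ|) := by
  refine ⟨2 * π + 4, by positivity, fun a γ ha => ?_⟩
  obtain ⟨ha0, ha1⟩ := ha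
  set w : ℂ := (-1 : ℂ) + γ * Complex.I with hw
  set f : ℝ → ℂ := fun t => Complex.exp (Complex.I * t) * (t : ℂ) ^ w with hf
  set E : ℂ := ((Real.exp (-(γ * π)) : ℝ) : ℂ) with hE
  -- set equality
  have hset : {t : ℝ | a < |t| ∧ |t| < 1} = Set.Ioo (-1 : ℝ) (-a) ∪ Set.Ioo a 1 := by
    ext t
    simp only [Set.mem_setOf_eq, Set.mem_union, Set.mem_Ioo]
    rcases abs_cases t with ⟨h1, h2⟩ | ⟨h1, h2⟩ <;> rw [h1] <;> constructor
    · intro h; right; exact h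
    · rintro (⟨u, v⟩ | h); · linarith
      · exact h
    · rintro ⟨u, v⟩; left; constructor <;> linarith
    · rintro (⟨u, v⟩ | ⟨u, v⟩) <;> constructor <;> linarith
  -- continuity of f away from 0
  have hcf : ∀ x : ℝ, x ≠ 0 → ContinuousAt f x := by
    intro x hx
    exact (Complex.continuous_exp.comp
        (continuous_const.mul Complex.continuous_ofReal)).continuousAt.mul
      (Complex.continuousAt_ofReal_cpow_const x w (Or.inr hx))
  have hint1 : IntegrableOn f (Set.Ioo a 1) volume := by
    refine (ContinuousOn.integrableOn_Icc ?_).mono_set Set.Ioo_subset_Icc_self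
    exact fun x hx => (hcf x (by linarith [hx.1] : x ≠ 0)).continuousWithinAt
  have hint2 : IntegrableOn f (Set.Ioo (-1 : ℝ) (-a)) volume := by
    refine (ContinuousOn.integrableOn_Icc ?_).mono_set Set.Ioo_subset_Icc_self
    exact fun x hx => (hcf x (by intro h; rw [h] at hx; exact absurd hx.2 (by linarith))).continuousWithinAt
  have hdisj : Disjoint (Set.Ioo (-1 : ℝ) (-a)) (Set.Ioo a 1) := by
    rw [Set.disjoint_left]
    rintro x ⟨_, h2⟩ ⟨h3, _⟩
    linarith
  rw [hset, setIntegral_union hdisj measurableSet_Ioo hint2 hint1]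
  -- convert to interval integrals
  have e1 : ∫ t in Set.Ioo a 1, f t = ∫ t in a..1, f t := by
    rw [intervalIntegral.integral_of_le ha1.le, integral_Ioc_eq_integral_Ioo]
  have e2 : ∫ t in Set.Ioo (-1 : ℝ) (-a), f t = ∫ t in a..1, f (-t) := by
    rw [intervalIntegral.integral_comp_neg (a := a) (b := 1),
      intervalIntegral.integral_of_le (by linarith : (-1 : ℝ) ≤ -a),
      integral_Ioc_eq_integral_Ioo]
  rw [e1, e2]
  -- interval integrability facts
  have huIcc : Set.uIcc a 1 = Set.Icc a 1 := Set.uIcc_of_le ha1.le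
  have hab : (0 : ℝ) ∉ Set.uIcc a 1 := by
    rw [huIcc]; intro h; exact absurd h.1 (by linarith)
  have hcpow : ContinuousOn (fun x : ℝ => (x : ℂ) ^ w) (Set.uIcc a 1) := by
    intro x hx
    rw [huIcc] at hx
    exact (Complex.continuousAt_ofReal_cpow_const x w
      (Or.inr (by linarith [hx.1] : x ≠ 0))).continuousWithinAt
  set g0 : ℝ → ℂ := fun x => (x : ℂ) ^ w with hg0
  set g1 : ℝ → ℂ := fun x => (Complex.exp (Complex.I * x) - 1) * (x : ℂ) ^ w with hg1
  set g2 : ℝ → ℂ := fun x => (Complex.exp (-(Complex.I * x)) - 1) * (x : ℂ) ^ w with hg2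
  have hi0 : IntervalIntegrable g0 volume a 1 := intervalIntegral.intervalIntegrable_cpow (Or.inr hab)
  have hi1 : IntervalIntegrable g1 volume a 1 := by
    refine ContinuousOn.intervalIntegrable ?_
    exact (((Complex.continuous_exp.comp
      (continuous_const.mul Complex.continuous_ofReal)).sub continuous_const).continuousOn).mul hcpow
  have hi2 : IntervalIntegrable g2 volume a 1 := by
    refine ContinuousOn.intervalIntegrable ?_
    exact (((Complex.continuous_exp.comp
      ((continuous_const.mul Complex.continuous_ofReal).neg)).sub continuous_const).continuousOn).mul hcpow
  have hfpos : IntervalIntegrable f volume a 1 := by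
    refine ContinuousOn.intervalIntegrable ?_
    intro x hx
    rw [huIcc] at hx
    exact (hcf x (by linarith [hx.1] : x ≠ 0)).continuousWithinAt
  have hfneg : IntervalIntegrable (fun t => f (-t)) volume a 1 := by
    refine ContinuousOn.intervalIntegrable ?_
    intro x hx
    rw [huIcc] at hx
    exact ((hcf (-x) (by intro h; rw [neg_eq_zero] at h; rw [h] at hx; linarith [hx.1])).comp
      continuous_neg.continuousAt).continuousWithinAt
  -- decompose the sum of integrals
  have key : (∫ t in a..1, f (-t)) + ∫ t in a..1, f t
      = (1 - E) * (∫ t in a..1, g0 t) + ((∫ t in a..1, g1 t) - E * ∫ t in a..1, g2 t) := by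
    rw [← intervalIntegral.integral_add hfneg hfpos,
      ← intervalIntegral.integral_const_mul, ← intervalIntegral.integral_const_mul,
      ← intervalIntegral.integral_sub hi1 (hi2.const_mul E),
      ← intervalIntegral.integral_add (hi0.const_mul (1 - E)) (hi1.sub (hi2.const_mul E))]
    apply intervalIntegral.integral_congr
    intro x hx
    rw [huIcc] at hx
    have hx0 : 0 < x := by linarith [hx.1]
    simp only [hf, hg0, hg1, hg2]
    have harg : Complex.I * ((-x : ℝ) : ℂ) = -(Complex.I * (x : ℂ)) := by push_cast; ring
    rw [harg, cpow_neg_ofReal_s1 γ hx0, ← hE]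
    ring
  rw [key]
  -- norm facts
  have hre : w.re = -1 := by simp [hw]
  have hexp1 : (1 : ℝ) ≤ Real.exp (π * |γ|) :=
    Real.one_le_exp (by positivity)
  have hEnorm : ‖E‖ ≤ Real.exp (π * |γ|) := by
    rw [hE, Complex.norm_real, Real.norm_eq_abs, abs_of_pos (Real.exp_pos _)]
    apply Real.exp_le_exp.mpr
    calc -(γ * π) ≤ |γ * π| := neg_le_abs _
      _ = π * |γ| := by rw [abs_mul, abs_of_pos Real.pi_pos]; ring
  have hnormcpow : ∀ x : ℝ, 0 < x → ‖(x : ℂ) ^ w‖ = x ^ (-1 : ℝ) := by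
    intro x hx
    rw [Complex.norm_cpow_eq_rpow_re_of_pos hx, hre]
  -- bound for g1
  have hb1 : ‖∫ t in a..1, g1 t‖ ≤ 2 := by
    have h := intervalIntegral.norm_integral_le_of_norm_le_const (C := 2) (f := g1)
      (a := a) (b := 1) ?_
    · calc ‖∫ t in a..1, g1 t‖ ≤ 2 * |1 - a| := h
        _ ≤ 2 * 1 := by rw [abs_of_pos (by linarith)]; nlinarith
        _ = 2 := by ring
    · intro x hx
      rw [Set.uIoc_of_le ha1.le] at hx
      have hx0 : 0 < x := lt_trans ha0 hx.1
      have habs : ‖Complex.I * (x : ℂ)‖ = x := by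
        rw [norm_mul, Complex.norm_I, Complex.norm_real, one_mul, Real.norm_eq_abs, abs_of_pos hx0]
      have h1 : ‖Complex.exp (Complex.I * x) - 1‖ ≤ 2 * x := by
        have := Complex.norm_exp_sub_one_le (x := Complex.I * x) (by rw [habs]; exact hx.2)
        rwa [habs] at this
      rw [hg1]
      simp only [norm_mul]
      rw [hnormcpow x hx0, Real.rpow_neg_one]
      calc ‖Complex.exp (Complex.I * x) - 1‖ * (x : ℝ)⁻¹ ≤ (2 * x) * x⁻¹ := by
            apply mul_le_mul_of_nonneg_right h1 (by positivity)
        _ = 2 := by field_simp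
  -- bound for g2
  have hb2 : ‖∫ t in a..1, g2 t‖ ≤ 2 := by
    have h := intervalIntegral.norm_integral_le_of_norm_le_const (C := 2) (f := g2)
      (a := a) (b := 1) ?_
    · calc ‖∫ t in a..1, g2 t‖ ≤ 2 * |1 - a| := h
        _ ≤ 2 * 1 := by rw [abs_of_pos (by linarith)]; nlinarith
        _ = 2 := by ring
    · intro x hx
      rw [Set.uIoc_of_le ha1.le] at hx
      have hx0 : 0 < x := lt_trans ha0 hx.1
      have habs : ‖-(Complex.I * (x : ℂ))‖ = x := by
        rw [norm_neg, norm_mul, Complex.norm_I, Complex.norm_real, one_mul, Real.norm_eq_abs, abs_of_pos hx0]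
      have h1 : ‖Complex.exp (-(Complex.I * x)) - 1‖ ≤ 2 * x := by
        have := Complex.norm_exp_sub_one_le (x := -(Complex.I * x)) (by rw [habs]; exact hx.2)
        rwa [habs] at this
      rw [hg2]
      simp only [norm_mul]
      rw [hnormcpow x hx0, Real.rpow_neg_one]
      calc ‖Complex.exp (-(Complex.I * x)) - 1‖ * (x : ℝ)⁻¹ ≤ (2 * x) * x⁻¹ := by
            apply mul_le_mul_of_nonneg_right h1 (by positivity)
        _ = 2 := by field_simp
  -- bound for main term
  have hb0 : ‖(1 - E) * ∫ t in a..1, g0 t‖ ≤ 2 * π * Real.exp (π * |γ|) := by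
    by_cases hγ : γ = 0
    · subst hγ
      have : E = 1 := by rw [hE]; norm_num
      rw [this]
      simp
      positivity
    · have hγ' : |γ| > 0 := abs_pos.mpr hγ
      have hw1 : w ≠ -1 := by
        rw [hw]
        intro h
        have := congrArg Complex.im h
        simp at this
        exact hγ this
      have hval := integral_cpow (a := a) (b := 1) (r := w) (Or.inr ⟨hw1, hab⟩)
      have hw2 : w + 1 = (γ : ℂ) * Complex.I := by rw [hw]; ring
      rw [hg0]
      rw [hval, hw2]
      have hn1 : ‖((1 : ℝ) : ℂ) ^ ((γ : ℂ) * Complex.I)‖ = 1 := by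
        norm_num
      have hn2 : ‖((a : ℝ) : ℂ) ^ ((γ : ℂ) * Complex.I)‖ = 1 := by
        rw [Complex.norm_cpow_eq_rpow_re_of_pos ha0]
        simp
      have hn3 : ‖((γ : ℂ) * Complex.I)‖ = |γ| := by
        simp
      have hint : ‖(((1 : ℝ) : ℂ) ^ ((γ : ℂ) * Complex.I) - ((a : ℝ) : ℂ) ^ ((γ : ℂ) * Complex.I))
          / ((γ : ℂ) * Complex.I)‖ ≤ 2 / |γ| := by
        rw [norm_div, hn3]
        gcongr
        exact (norm_sub_le _ _).trans (by rw [hn1, hn2]; norm_num)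
      have h1E : ‖(1 : ℂ) - E‖ ≤ (|γ| * π) * Real.exp (π * |γ|) := by
        have heq : (1 : ℂ) - E = ((1 - Real.exp (-(γ * π)) : ℝ) : ℂ) := by
          rw [hE]; push_cast; ring
        rw [heq, Complex.norm_real, Real.norm_eq_abs]
        have := abs_one_sub_exp_le (-(γ * π))
        have habs2 : |(-(γ * π))| = |γ| * π := by
          rw [abs_neg, abs_mul, abs_of_pos Real.pi_pos]
        rw [habs2] at this
        calc |1 - Real.exp (-(γ * π))| ≤ |γ| * π * Real.exp (|γ| * π) := this
          _ = |γ| * π * Real.exp (π * |γ|) := by rw [mul_comm (|γ|) π]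
      calc ‖(1 - E) * ((((1 : ℝ) : ℂ) ^ ((γ : ℂ) * Complex.I) - ((a : ℝ) : ℂ) ^ ((γ : ℂ) * Complex.I))
              / ((γ : ℂ) * Complex.I))‖
          = ‖(1 : ℂ) - E‖ * ‖(((1 : ℝ) : ℂ) ^ ((γ : ℂ) * Complex.I) - ((a : ℝ) : ℂ) ^ ((γ : ℂ) * Complex.I))
              / ((γ : ℂ) * Complex.I)‖ := norm_mul _ _
        _ ≤ ((|γ| * π) * Real.exp (π * |γ|)) * (2 / |γ|) :=
            mul_le_mul h1E hint (norm_nonneg _) (by positivity)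
        _ = 2 * π * Real.exp (π * |γ|) := by field_simp
  -- final assembly
  calc ‖(1 - E) * (∫ t in a..1, g0 t) + ((∫ t in a..1, g1 t) - E * ∫ t in a..1, g2 t)‖
      ≤ ‖(1 - E) * ∫ t in a..1, g0 t‖ + ‖(∫ t in a..1, g1 t) - E * ∫ t in a..1, g2 t‖ :=
        norm_add_le _ _
    _ ≤ ‖(1 - E) * ∫ t in a..1, g0 t‖ + (‖∫ t in a..1, g1 t‖ + ‖E * ∫ t in a..1, g2 t‖) := by
        linarith [norm_sub_le (∫ t in a..1, g1 t) (E * ∫ t in a..1, g2 t)]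
    _ ≤ 2 * π * Real.exp (π * |γ|) + (2 + Real.exp (π * |γ|) * 2) := by
        have := norm_mul E (∫ t in a..1, g2 t)
        have hE2 : ‖E * ∫ t in a..1, g2 t‖ ≤ Real.exp (π * |γ|) * 2 := by
          rw [norm_mul]
          exact mul_le_mul hEnorm hb2 (norm_nonneg _) (Real.exp_pos _).le
        linarith
    _ ≤ (2 * π + 4) * Real.exp (π * |γ|) := by nlinarith [Real.pi_pos]
end

section
/- There exists a constant C > 0 such that for all R ∈ (1,∞) and all γ ∈ ℝ, one has |∫_{{t ∈ ℝ : 1 < |t| < R}} e^{it} t^{-1+iγ} dt| ≤ C (1+|γ|) e^{π|γ|}. -/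
open MeasureTheory Real

open Set in

private lemma norm_cpow_le' {t : ℝ} (ht : t ≠ 0) (c : ℂ) :
    ‖(t:ℂ) ^ c‖ ≤ |t| ^ c.re * Real.exp (π * |c.im|) := by
  rw [Complex.norm_cpow_of_ne_zero (Complex.ofReal_ne_zero.mpr ht),
    Complex.norm_real, Real.norm_eq_abs, div_eq_mul_inv, ← Real.exp_neg]
  gcongr
  have h1 : |Complex.arg (t:ℂ) * c.im| ≤ π * |c.im| := by
    rw [abs_mul]
    exact mul_le_mul_of_nonneg_right (Complex.abs_arg_le_pi _) (abs_nonneg _)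
  have h2 := neg_abs_le (Complex.arg (t:ℂ) * c.im)
  linarith

private lemma hasDerivAt_u (t : ℝ) :
    HasDerivAt (fun s : ℝ => -Complex.I * Complex.exp (Complex.I * s))
      (Complex.exp (Complex.I * t)) t := by
  have h1 : HasDerivAt (fun s : ℝ => Complex.I * (s:ℂ)) Complex.I t := by
    simpa using (Complex.ofRealCLM.hasDerivAt (x := t)).const_mul Complex.I
  have := (h1.cexp).const_mul (-Complex.I)
  refine this.congr_deriv ?_
  rw [show Complex.exp (Complex.I*t) * Complex.I = Complex.I * Complex.exp (Complex.I*t) from mul_comm _ _]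
  rw [← mul_assoc, neg_mul, Complex.I_mul_I]
  ring

private lemma hasDerivAt_v {t : ℝ} (ht : t ≠ 0) {w : ℂ} (hw : w ≠ 0) :
    HasDerivAt (fun s : ℝ => (s:ℂ) ^ w) (w * (t:ℂ) ^ (w - 1)) t := by
  have hr : w - 1 ≠ -1 := by intro h; apply hw; linear_combination h
  have := (hasDerivAt_ofReal_cpow_const' ht hr).const_mul w
  simp only [sub_add_cancel] at this
  refine this.congr_of_eventuallyEq (Filter.Eventually.of_forall fun s => ?_)
  simp only
  rw [mul_div_cancel₀ _ hw]

private lemma key (γ a b : ℝ) (hab : a ≤ b) (h1 : ∀ t ∈ Set.uIcc a b, 1 ≤ |t|) :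
    ‖∫ t in a..b, Complex.exp (Complex.I * t) * (t:ℂ) ^ ((-1:ℂ) + γ * Complex.I)‖
      ≤ 4 * (1 + |γ|) * Real.exp (π * |γ|) := by
  set w : ℂ := (-1:ℂ) + γ * Complex.I with hw_def
  have hw_re : w.re = -1 := by simp [hw_def]
  have hw_im : w.im = γ := by simp [hw_def]
  have hw1_re : (w - 1).re = -2 := by simp [hw_def]; ring
  have hw1_im : (w - 1).im = γ := by simp [hw_def]
  have hw : w ≠ 0 := by
    intro h; rw [h] at hw_re; simp at hw_re
  have hwabs : ‖w‖ ≤ 1 + |γ| := by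
    calc ‖w‖ ≤ ‖(-1:ℂ)‖ + ‖(γ:ℂ) * Complex.I‖ :=
          norm_add_le _ _
      _ = 1 + |γ| := by simp
  have h0 : ∀ t ∈ Set.uIcc a b, t ≠ 0 := fun t ht => by
    intro h; have := h1 t ht; rw [h] at this; norm_num at this
  set E := Real.exp (π * |γ|) with hE_def
  have hE1 : 1 ≤ E := Real.one_le_exp (by positivity)
  have hE0 : 0 < E := lt_of_lt_of_le one_pos hE1
  set u : ℝ → ℂ := fun s => -Complex.I * Complex.exp (Complex.I * s)
  set u' : ℝ → ℂ := fun s => Complex.exp (Complex.I * s)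
  set v : ℝ → ℂ := fun s => (s:ℂ) ^ w
  set v' : ℝ → ℂ := fun s => w * (s:ℂ) ^ (w - 1)
  have hnu : ∀ s : ℝ, ‖u s‖ = 1 := by
    intro s
    simp only [u, norm_mul, norm_neg, Complex.norm_I, Complex.norm_exp]
    simp
  have hnu' : ∀ s : ℝ, ‖u' s‖ = 1 := by
    intro s
    simp only [u', Complex.norm_exp]
    simp
  have hnv : ∀ t ∈ Set.uIcc a b, ‖v t‖ ≤ E := by
    intro t ht
    refine le_trans (norm_cpow_le' (h0 t ht) w) ?_
    rw [hw_re, hw_im]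
    have : |t| ^ (-1:ℝ) ≤ 1 := by
      rw [Real.rpow_neg_one]
      exact inv_le_one_of_one_le₀ (h1 t ht)
    nlinarith [Real.exp_pos (π * |γ|), Real.rpow_nonneg (abs_nonneg t) (-1:ℝ)]
  have hnv' : ∀ t ∈ Set.uIcc a b, ‖v' t‖ ≤ (1 + |γ|) * E * (t ^ (-2:ℤ)) := by
    intro t ht
    have h2 : ‖(t:ℂ) ^ (w-1)‖ ≤ |t| ^ (-2:ℝ) * E := by
      have := norm_cpow_le' (h0 t ht) (w - 1)
      rwa [hw1_re, hw1_im] at this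
    have h3 : |t| ^ (-2:ℝ) = t ^ (-2:ℤ) := by
      rw [show ((-2:ℝ)) = ((-2:ℤ):ℝ) by norm_num, Real.rpow_intCast]
      rw [show (-2:ℤ) = -(2:ℤ) by norm_num]
      rw [zpow_neg, zpow_neg]
      congr 1
      rw [zpow_two, zpow_two, abs_mul_abs_self]
    rw [norm_mul]
    calc ‖w‖ * ‖(t:ℂ) ^ (w-1)‖ ≤ (1 + |γ|) * (|t| ^ (-2:ℝ) * E) := by
          apply mul_le_mul hwabs h2 (norm_nonneg _) (by positivity)
      _ = (1 + |γ|) * E * (t ^ (-2:ℤ)) := by rw [h3]; ring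
  have hu : ∀ t ∈ Set.Ioo (min a b) (max a b), HasDerivAt u (u' t) t :=
    fun t _ => hasDerivAt_u t
  have hv : ∀ t ∈ Set.Ioo (min a b) (max a b), HasDerivAt v (v' t) t := by
    intro t ht
    exact hasDerivAt_v (h0 t (Set.Ioo_subset_Icc_self ht)) hw
  have hvc : ContinuousOn v (Set.uIcc a b) := by
    intro t ht
    exact ((hasDerivAt_v (h0 t ht) hw).continuousAt).continuousWithinAt
  have huc : ContinuousOn u (Set.uIcc a b) := by
    intro t ht
    exact ((hasDerivAt_u t).continuousAt).continuousWithinAt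
  have hu'c : ContinuousOn u' (Set.uIcc a b) :=
    fun t _ => (Complex.continuous_exp.comp (by continuity)).continuousAt.continuousWithinAt
  have hv'c : ContinuousOn v' (Set.uIcc a b) := by
    intro t ht
    have hr : w - 1 ≠ -1 := fun h => hw (by linear_combination h)
    have h2 : ContinuousAt (fun s : ℝ => (s:ℂ) ^ (w-1)) t := by
      have := hasDerivAt_v (w := w - 1) (h0 t ht) (by intro h; rw [h] at hw1_re; simp at hw1_re)
      exact this.continuousAt
    exact (continuousAt_const.mul h2).continuousWithinAt
  have hint1 : IntervalIntegrable (fun t => u' t * v t) volume a b :=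
    (hu'c.mul hvc).intervalIntegrable
  have hint2 : IntervalIntegrable (fun t => u t * v' t) volume a b :=
    (huc.mul hv'c).intervalIntegrable
  have ibp := intervalIntegral.integral_deriv_mul_eq_sub_of_hasDerivAt huc hvc hu hv
    hu'c.intervalIntegrable hv'c.intervalIntegrable
  rw [intervalIntegral.integral_add hint1 hint2] at ibp
  have heq : (∫ t in a..b, Complex.exp (Complex.I * t) * (t:ℂ) ^ w)
      = (u b * v b - u a * v a) - ∫ t in a..b, u t * v' t := by
    have : (∫ t in a..b, u' t * v t) = (u b * v b - u a * v a) - ∫ t in a..b, u t * v' t := by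
      linear_combination ibp
    exact this
  rw [heq]
  -- now bound
  have hb1 : ‖u b * v b‖ ≤ E := by
    rw [norm_mul, hnu b]
    simpa using hnv b (by simp [Set.uIcc_of_le hab, hab])
  have hb2 : ‖u a * v a‖ ≤ E := by
    rw [norm_mul, hnu a]
    simpa using hnv a (by simp [Set.uIcc_of_le hab, hab])
  have hzero : (0:ℝ) ∉ Set.uIcc a b := fun h => by have := h1 0 h; norm_num at this
  have hgint : IntervalIntegrable (fun t : ℝ => (1 + |γ|) * E * (t ^ (-2:ℤ))) volume a b := by
    apply ContinuousOn.intervalIntegrable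
    apply ContinuousOn.mul continuousOn_const
    intro t ht
    exact ((continuousAt_zpow₀ t (-2) (Or.inl (h0 t ht))).comp continuousAt_id).continuousWithinAt
  have hbound : ‖∫ t in a..b, u t * v' t‖ ≤ 2 * ((1 + |γ|) * E) := by
    have h4 := intervalIntegral.norm_integral_le_abs_of_norm_le (μ := volume) (a := a) (b := b)
      (f := fun t => u t * v' t) (g := fun t => (1 + |γ|) * E * (t ^ (-2:ℤ)))
      ?_ hgint
    · refine h4.trans ?_
      have hz : ∫ t in a..b, (t:ℝ) ^ (-2:ℤ) = ((b:ℝ) ^ (-1:ℤ) - a ^ (-1:ℤ)) / ((-1:ℝ)) := by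
        have := integral_zpow (a := a) (b := b) (n := (-2:ℤ)) (Or.inr ⟨by norm_num, hzero⟩)
        convert this using 2 <;> norm_num
      rw [intervalIntegral.integral_const_mul, hz]
      have ha1 : 1 ≤ |a| := h1 a (by simp [Set.uIcc_of_le hab, hab])
      have hb1' : 1 ≤ |b| := h1 b (by simp [Set.uIcc_of_le hab, hab])
      have h5 : |((b:ℝ) ^ (-1:ℤ) - a ^ (-1:ℤ)) / ((-1:ℝ))| ≤ 2 := by
        rw [abs_div]
        simp only [zpow_neg_one, abs_neg, abs_one, div_one]
        have h6 : |b⁻¹ - a⁻¹| ≤ |b⁻¹| + |a⁻¹| := abs_sub _ _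
        have h7 : |b⁻¹| ≤ 1 := by rw [abs_inv]; exact inv_le_one_of_one_le₀ hb1'
        have h8 : |a⁻¹| ≤ 1 := by rw [abs_inv]; exact inv_le_one_of_one_le₀ ha1
        linarith
      rw [abs_mul]
      have h9 : |(1 + |γ|) * E| = (1 + |γ|) * E := abs_of_pos (by positivity)
      rw [h9]
      have h10 := mul_le_mul_of_nonneg_left h5 (by positivity : (0:ℝ) ≤ (1 + |γ|) * E)
      linarith
    · filter_upwards [ae_restrict_mem measurableSet_uIoc] with t ht
      exact le_trans (by rw [norm_mul, hnu t, one_mul]) (hnv' t (Set.uIoc_subset_uIcc ht))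
  calc ‖u b * v b - u a * v a - ∫ t in a..b, u t * v' t‖
      ≤ ‖u b * v b - u a * v a‖ + ‖∫ t in a..b, u t * v' t‖ := norm_sub_le _ _
    _ ≤ (‖u b * v b‖ + ‖u a * v a‖) + 2 * ((1 + |γ|) * E) := by
        have := norm_sub_le (u b * v b) (u a * v a); gcongr <;> linarith
    _ ≤ (E + E) + 2 * ((1 + |γ|) * E) := by gcongr <;> linarith
    _ ≤ 4 * (1 + |γ|) * E := by nlinarith [abs_nonneg γ]

private lemma fInt (γ a b : ℝ) (h1 : ∀ t ∈ Set.uIcc a b, 1 ≤ |t|) :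
    IntervalIntegrable (fun t : ℝ => Complex.exp (Complex.I * t) * (t:ℂ) ^ ((-1:ℂ) + γ * Complex.I))
      volume a b := by
  apply ContinuousOn.intervalIntegrable
  intro t ht
  have ht0 : t ≠ 0 := by
    intro h; have := h1 t ht; rw [h] at this; norm_num at this
  have hw : ((-1:ℂ) + γ * Complex.I) ≠ 0 := by
    intro h; have := congrArg Complex.re h; simp at this
  exact (((Complex.continuous_exp.comp (by continuity)).continuousAt).mul
    ((hasDerivAt_v ht0 hw).continuousAt)).continuousWithinAt

/-- There exists `C > 0` such that for all `R ∈ (1,∞)` and all `γ ∈ ℝ`,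
`|∫_{1<|t|<R} e^{it} t^{-1+iγ} dt| ≤ C (1+|γ|) e^{π|γ|}`, the complex power being taken
with the principal branch of the logarithm. -/
theorem stmt2 :
    ∃ C : ℝ, 0 < C ∧ ∀ R γ : ℝ, 1 < R →
      ‖∫ t in {t : ℝ | 1 < |t| ∧ |t| < R},
          Complex.exp (Complex.I * t) * (t : ℂ) ^ ((-1 : ℂ) + γ * Complex.I)‖ ≤
        C * (1 + |γ|) * Real.exp (π * |γ|) := by
  refine ⟨8, by norm_num, fun R γ hR => ?_⟩
  set f : ℝ → ℂ := fun t => Complex.exp (Complex.I * t) * (t:ℂ) ^ ((-1:ℂ) + γ * Complex.I) with hf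
  have hRle : (1:ℝ) ≤ R := hR.le
  have hset : {t : ℝ | 1 < |t| ∧ |t| < R} = Set.Ioo (-R) (-1) ∪ Set.Ioo 1 R := by
    ext t
    simp only [Set.mem_setOf_eq, Set.mem_union, Set.mem_Ioo]
    rcases le_or_gt 0 t with h | h
    · rw [abs_of_nonneg h]
      constructor
      · rintro ⟨h1, h2⟩; right; exact ⟨h1, h2⟩
      · rintro (⟨h1, h2⟩ | ⟨h1, h2⟩) <;> constructor <;> linarith
    · rw [abs_of_neg h]
      constructor
      · rintro ⟨h1, h2⟩; left; constructor <;> linarith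
      · rintro (⟨h1, h2⟩ | ⟨h1, h2⟩) <;> constructor <;> linarith
  have hneg : ∀ t ∈ Set.uIcc (-R) (-1:ℝ), 1 ≤ |t| := by
    intro t ht
    rw [Set.uIcc_of_le (by linarith)] at ht
    rcases ht with ⟨h1, h2⟩
    rw [abs_of_nonpos (by linarith)]
    linarith
  have hpos : ∀ t ∈ Set.uIcc (1:ℝ) R, 1 ≤ |t| := by
    intro t ht
    rw [Set.uIcc_of_le hRle] at ht
    rcases ht with ⟨h1, h2⟩
    rw [abs_of_nonneg (by linarith)]
    linarith
  have hIn : IntegrableOn f (Set.Ioo (-R) (-1)) volume := by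
    have := (intervalIntegrable_iff_integrableOn_Ioc_of_le (by linarith : (-R:ℝ) ≤ -1)).mp
      (fInt γ (-R) (-1) hneg)
    exact this.mono_set Set.Ioo_subset_Ioc_self
  have hIp : IntegrableOn f (Set.Ioo 1 R) volume := by
    have := (intervalIntegrable_iff_integrableOn_Ioc_of_le hRle).mp (fInt γ 1 R hpos)
    exact this.mono_set Set.Ioo_subset_Ioc_self
  have hdisj : Disjoint (Set.Ioo (-R) (-1:ℝ)) (Set.Ioo 1 R) := by
    rw [Set.disjoint_left]
    rintro t ⟨_, h2⟩ ⟨h3, _⟩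
    linarith
  rw [hset, setIntegral_union hdisj measurableSet_Ioo hIn hIp]
  have e1 : ∫ t in Set.Ioo (-R) (-1:ℝ), f t = ∫ t in (-R)..(-1:ℝ), f t := by
    rw [intervalIntegral.integral_of_le (by linarith : (-R:ℝ) ≤ -1),
      integral_Ioc_eq_integral_Ioo]
  have e2 : ∫ t in Set.Ioo (1:ℝ) R, f t = ∫ t in (1:ℝ)..R, f t := by
    rw [intervalIntegral.integral_of_le hRle, integral_Ioc_eq_integral_Ioo]
  rw [e1, e2]
  have k1 := key γ (-R) (-1) (by linarith) hneg
  have k2 := key γ 1 R hRle hpos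
  calc ‖(∫ t in (-R)..(-1:ℝ), f t) + ∫ t in (1:ℝ)..R, f t‖
      ≤ ‖∫ t in (-R)..(-1:ℝ), f t‖ + ‖∫ t in (1:ℝ)..R, f t‖ := norm_add_le _ _
    _ ≤ 4 * (1 + |γ|) * Real.exp (π * |γ|) + 4 * (1 + |γ|) * Real.exp (π * |γ|) := by
        exact add_le_add k1 k2
    _ = 8 * (1 + |γ|) * Real.exp (π * |γ|) := by ring
end
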